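/- Let n ∈ ℕ₊, let H̃ ∈ ℝ^{n×n}, λ ∈ ℝ, τ > 0, and let γ, θ, φ, ψ, γ̃, θ̃, φ̃, ψ̃ ∈ ℝ^n, where all components of φ, ψ, φ̃, ψ̃ are positive. Suppose Δz ∈ ℝ^n satisfies the compact system (2λH̃ + diag(γ̃/φ̃) + diag(θ̃/ψ̃))·Δz = τ·(1/ψ̃) − τ·(1/φ̃) + (γ ⊙ φ)/φ̃ − (θ ⊙ ψ)/ψ̃, and define Δγ = (γ̃/φ̃) ⊙ Δz + τ·(1/φ̃) − (γ ⊙ φ)/φ̃, Δθ = −(θ̃/ψ̃) ⊙ Δz + τ·(1/ψ̃) − (θ ⊙ ψ)/ψ̃, Δφ = −Δz, Δψ = Δz. Then with Ω = [I, −I] ∈ ℝ^{n×2n}, Δx = col(Δγ, Δθ), Δs = col(Δφ, Δψ), x = col(γ, θ), s = col(φ, ψ), x̃ = col(γ̃, θ̃), and s̃ = col(φ̃, ψ̃), the approximated Newton system holds: 2λH̃Δz + ΩΔx = 0, ΩᵀΔz + Δs = 0, and s̃ ⊙ Δx + x̃ ⊙ Δs = τe − x ⊙ s. -/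

import Mathlib

open Matrix

/-- the solution of the approximated compact linear system, together with
the back-substitutions for `Δγ, Δθ, Δφ, Δψ`, solves the approximated Newton system. -/
theorem compact_implies_approx_newton (n : ℕ) (hn : 0 < n)
    (Ht : Matrix (Fin n) (Fin n) ℝ) (lam : ℝ) (τ : ℝ) (hτ : 0 < τ)
    (γ θ φ ψ γt θt φt ψt : Fin n → ℝ)
    (hφ : ∀ i, 0 < φ i) (hψ : ∀ i, 0 < ψ i)
    (hφt : ∀ i, 0 < φt i) (hψt : ∀ i, 0 < ψt i)
    (Δz : Fin n → ℝ)
    (hcompact : ((2 * lam) • Ht + Matrix.diagonal (fun i => γt i / φt i)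
        + Matrix.diagonal (fun i => θt i / ψt i)).mulVec Δz
      = fun i => τ * (ψt i)⁻¹ - τ * (φt i)⁻¹ + (γ i * φ i) / φt i - (θ i * ψ i) / ψt i)
    (Δγ Δθ Δφ Δψ : Fin n → ℝ)
    (hΔγ : Δγ = fun i => (γt i / φt i) * Δz i + τ * (φt i)⁻¹ - (γ i * φ i) / φt i)
    (hΔθ : Δθ = fun i => -(θt i / ψt i) * Δz i + τ * (ψt i)⁻¹ - (θ i * ψ i) / ψt i)
    (hΔφ : Δφ = -Δz) (hΔψ : Δψ = Δz)
    (Ω : Matrix (Fin n) (Fin n ⊕ Fin n) ℝ)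
    (hΩ : Ω = Matrix.fromCols (1 : Matrix (Fin n) (Fin n) ℝ) (-1))
    (Δx Δs x s xt st : Fin n ⊕ Fin n → ℝ)
    (hΔx : Δx = Sum.elim Δγ Δθ) (hΔs : Δs = Sum.elim Δφ Δψ)
    (hxdef : x = Sum.elim γ θ) (hsdef : s = Sum.elim φ ψ)
    (hxtdef : xt = Sum.elim γt θt) (hstdef : st = Sum.elim φt ψt) :
    (2 * lam) • Ht.mulVec Δz + Ω.mulVec Δx = 0 ∧
    Ωᵀ.mulVec Δz + Δs = 0 ∧
    (fun i => st i * Δx i + xt i * Δs i) = fun i => τ - x i * s i := by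
  have hc : ∀ i, (2 * lam) * Ht.mulVec Δz i + (γt i / φt i) * Δz i + (θt i / ψt i) * Δz i
      = τ * (ψt i)⁻¹ - τ * (φt i)⁻¹ + (γ i * φ i) / φt i - (θ i * ψ i) / ψt i := by
    intro i
    have := congrFun hcompact i
    simpa [Matrix.add_mulVec, Matrix.mulVec_diagonal, Matrix.smul_mulVec] using this
  refine ⟨?_, ?_, ?_⟩
  · funext i
    have := hc i
    simp only [hΩ, hΔx, Matrix.fromCols_mulVec_sumElim, hΔγ, hΔθ, Pi.add_apply,
      Pi.smul_apply, Matrix.neg_mulVec, Matrix.one_mulVec, Pi.neg_apply, Pi.zero_apply,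
      smul_eq_mul]
    linarith
  · funext i
    simp only [hΩ, Matrix.transpose_fromCols, Matrix.fromRows_mulVec, hΔs, hΔφ, hΔψ,
      Pi.add_apply, Pi.zero_apply]
    cases i with
    | inl i => simp
    | inr i => simp [Matrix.neg_mulVec]
  · funext i
    cases i with
    | inl i =>
      have h := (hφt i).ne'
      simp only [hstdef, hxtdef, hΔx, hΔs, hxdef, hsdef, Sum.elim_inl, hΔγ, hΔφ, Pi.neg_apply]
      field_simp
      ring
    | inr i =>
      have h := (hψt i).ne'
      simp only [hstdef, hxtdef, hΔx, hΔs, hxdef, hsdef, Sum.elim_inr, hΔθ, hΔψ]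
      field_simp
      ring
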